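/- Let A ∈ ℝ^{n×n} be symmetric nonsingular indefinite and T ∈ ℝ^{n×n} symmetric positive definite. Let μ₁ ≤ ... ≤ μₙ be the eigenvalues of T|A| and λ₁ ≤ ... ≤ λ_p < 0 < λ_{p+1} ≤ ... ≤ λₙ the eigenvalues of TA. Then for j = 1,...,n one has −μ_{n−j+1} ≤ λ_j ≤ μ_j. -/

import Mathlib

open Matrix Polynomial

/-- The matrix absolute value `|A| = V |Λ| V*` of a real symmetric matrix. -/
noncomputable def matAbs {n : Type*} [Fintype n] [DecidableEq n]
    {A : Matrix n n ℝ} (hA : A.IsHermitian) : Matrix n n ℝ :=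
  (hA.eigenvectorUnitary : Matrix n n ℝ) *
    Matrix.diagonal (fun i => |hA.eigenvalues i|) *
    star (hA.eigenvectorUnitary : Matrix n n ℝ)

namespace EigenAux

local notation "⟪" x ", " y "⟫_ℝ" => @inner ℝ _ _ x y

variable {m : ℕ}

lemma charpoly_conj_aux (P Q B : Matrix (Fin m) (Fin m) ℝ) (h : P * Q = 1) :
    (P * B * Q).charpoly = B.charpoly := by
  have hQP : Q * P = 1 := mul_eq_one_comm.mp h
  have hc : charmatrix (P * B * Q) = P.map C * charmatrix B * Q.map C := by
    rw [charmatrix, charmatrix]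
    simp only [Matrix.mul_sub, Matrix.sub_mul, RingHom.mapMatrix_apply]
    congr 1
    · have hcomm : P.map ⇑C * Matrix.scalar (Fin m) X = Matrix.scalar (Fin m) X * P.map ⇑C :=
        (Matrix.scalar_commute X (fun r => Commute.all X r) (P.map ⇑C)).symm
      rw [scalar_apply] at hcomm
      rw [scalar_apply]
      rw [hcomm, Matrix.mul_assoc, ← Matrix.map_mul, h]
      simp
    · rw [← Matrix.map_mul, ← Matrix.map_mul]
  rw [charpoly, hc, det_mul, det_mul, charpoly, mul_comm, ← mul_assoc, ← det_mul,
    ← Matrix.map_mul, hQP]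
  simp

lemma charpoly_diag (d : Fin m → ℝ) :
    (Matrix.diagonal d).charpoly = ∏ i, (X - C (d i)) := by
  rw [Matrix.charpoly_of_upperTriangular _ (Matrix.blockTriangular_diagonal d)]
  simp

lemma roots_prod_fin (f : Fin m → ℝ) :
    (∏ j, (X - C (f j))).roots = Finset.univ.val.map f := by
  have : (∏ j, (X - C (f j))) = ((Finset.univ.val.map f).map fun a => X - C a).prod := by
    rw [Multiset.map_map]; rfl
  rw [this, roots_multiset_prod_X_sub_C]

lemma mono_eq_of_multiset {f g : Fin m → ℝ} (hf : Monotone f) (hg : Monotone g)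
    (h : Finset.univ.val.map f = Finset.univ.val.map g) : f = g := by
  have hperm : (List.ofFn f).Perm (List.ofFn g) := by
    rw [← Multiset.coe_eq_coe]
    simpa [List.ofFn_eq_map, ← Multiset.map_coe, Fin.univ_def] using h
  have heq := List.Perm.eq_of_sortedLE
    ((List.sortedLE_ofFn_iff).mpr hf) ((List.sortedLE_ofFn_iff).mpr hg) hperm
  funext i
  have h2 := congrArg (fun l => l[(i : ℕ)]?) heq
  simpa using h2

lemma hermitian_spectral {B : Matrix (Fin m) (Fin m) ℝ} (hB : B.IsHermitian) :
    B = (hB.eigenvectorUnitary : Matrix (Fin m) (Fin m) ℝ) *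
      Matrix.diagonal hB.eigenvalues * star (hB.eigenvectorUnitary : Matrix (Fin m) (Fin m) ℝ) := by
  simpa using hB.spectral_theorem

lemma charpoly_hermitian {B : Matrix (Fin m) (Fin m) ℝ} (hB : B.IsHermitian) :
    B.charpoly = ∏ i, (X - C (hB.eigenvalues i)) := by
  conv_lhs => rw [hermitian_spectral hB]
  rw [charpoly_conj_aux _ _ _ (Unitary.mul_star_self_of_mem hB.eigenvectorUnitary.2),
    charpoly_diag]

lemma multiset_eig {B : Matrix (Fin m) (Fin m) ℝ} (hB : B.IsHermitian) {f : Fin m → ℝ}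
    (h : B.charpoly = ∏ j, (X - C (f j))) :
    Finset.univ.val.map f = Finset.univ.val.map hB.eigenvalues := by
  rw [← roots_prod_fin f, ← h, charpoly_hermitian hB, roots_prod_fin]

lemma multiset_eig_neg {B : Matrix (Fin m) (Fin m) ℝ} (hB : B.IsHermitian) :
    Finset.univ.val.map (hB.neg.eigenvalues)
      = (Finset.univ.val.map hB.eigenvalues).map (fun a => -a) := by
  have hneg : -B = (hB.eigenvectorUnitary : Matrix (Fin m) (Fin m) ℝ) *
      Matrix.diagonal (fun i => -hB.eigenvalues i) *
      star (hB.eigenvectorUnitary : Matrix (Fin m) (Fin m) ℝ) := by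
    have hsplit : (hB.eigenvectorUnitary : Matrix (Fin m) (Fin m) ℝ) *
        Matrix.diagonal (fun i => -hB.eigenvalues i) *
        star (hB.eigenvectorUnitary : Matrix (Fin m) (Fin m) ℝ)
        = -((hB.eigenvectorUnitary : Matrix (Fin m) (Fin m) ℝ) *
            Matrix.diagonal hB.eigenvalues *
            star (hB.eigenvectorUnitary : Matrix (Fin m) (Fin m) ℝ)) := by
      rw [← Matrix.diagonal_neg, Matrix.mul_neg, Matrix.neg_mul]
    rw [hsplit, ← hermitian_spectral hB]
  have hcp : (-B).charpoly = ∏ i, (X - C (-hB.eigenvalues i)) := by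
    rw [hneg, charpoly_conj_aux _ _ _ (Unitary.mul_star_self_of_mem hB.eigenvectorUnitary.2),
      charpoly_diag]
  have := multiset_eig hB.neg hcp
  rw [← this, Multiset.map_map]
  rfl

/- quadratic form machinery -/

lemma repr_mulVec {B : Matrix (Fin m) (Fin m) ℝ} (hB : B.IsHermitian)
    (x : EuclideanSpace ℝ (Fin m)) (i : Fin m) :
    hB.eigenvectorBasis.repr ((Matrix.toEuclideanLin B) x) i
      = hB.eigenvalues i * hB.eigenvectorBasis.repr x i := by
  set b := hB.eigenvectorBasis
  have hsym : (Matrix.toEuclideanLin B).IsSymmetric :=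
    (Matrix.isHermitian_iff_isSymmetric.mp hB)
  rw [b.repr_apply_apply, b.repr_apply_apply, ← hsym (b i) x]
  have hev : (Matrix.toEuclideanLin B) (b i) = hB.eigenvalues i • (b i) := by
    have := hB.mulVec_eigenvectorBasis i
    apply_fun (WithLp.equiv 2 (Fin m → ℝ)).symm at this
    simpa [Matrix.toEuclideanLin_apply] using this
  rw [hev, real_inner_smul_left]

lemma quad_eq {B : Matrix (Fin m) (Fin m) ℝ} (hB : B.IsHermitian)
    (x : EuclideanSpace ℝ (Fin m)) :
    ⟪x, (Matrix.toEuclideanLin B) x⟫_ℝ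
      = ∑ i, hB.eigenvalues i * (hB.eigenvectorBasis.repr x i)^2 := by
  set b := hB.eigenvectorBasis
  have h1 : ⟪x, (Matrix.toEuclideanLin B) x⟫_ℝ
      = ∑ i, (b.repr x i) * (b.repr ((Matrix.toEuclideanLin B) x) i) := by
    have h := b.repr.inner_map_map x ((Matrix.toEuclideanLin B) x)
    simp only [PiLp.inner_apply, RCLike.inner_apply, conj_trivial] at h
    simp only [PiLp.inner_apply, RCLike.inner_apply, conj_trivial]
    rw [← h]; exact Finset.sum_congr rfl fun i _ => mul_comm _ _
  rw [h1]
  refine Finset.sum_congr rfl fun i _ => ?_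
  rw [repr_mulVec hB x i]; ring

lemma norm_sq_eq {x : EuclideanSpace ℝ (Fin m)}
    (b : OrthonormalBasis (Fin m) ℝ (EuclideanSpace ℝ (Fin m))) :
    ⟪x, x⟫_ℝ = ∑ i, (b.repr x i)^2 := by
  have h := b.repr.inner_map_map x x
  simp only [PiLp.inner_apply, RCLike.inner_apply, conj_trivial, sq] at h ⊢
  exact h.symm

lemma repr_eq_zero_of_mem_span {b : OrthonormalBasis (Fin m) ℝ (EuclideanSpace ℝ (Fin m))}
    {s : Finset (Fin m)} {x : EuclideanSpace ℝ (Fin m)}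
    (hx : x ∈ Submodule.span ℝ (b '' ↑s)) {i : Fin m} (hi : i ∉ s) :
    b.repr x i = 0 := by
  rw [b.repr_apply_apply]
  induction hx using Submodule.span_induction with
  | mem y hy =>
      obtain ⟨k, hk, rfl⟩ := hy
      exact b.orthonormal.2 (fun h => hi (h ▸ hk))
  | zero => exact inner_zero_right _
  | add y z _ _ hy hz => rw [inner_add_right, hy, hz, add_zero]
  | smul c y _ hy => rw [inner_smul_right, hy, mul_zero]

lemma finrank_span_orthonormal {b : OrthonormalBasis (Fin m) ℝ (EuclideanSpace ℝ (Fin m))}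
    (s : Finset (Fin m)) :
    Module.finrank ℝ (Submodule.span ℝ (b '' ↑s)) = s.card := by
  have hli : LinearIndependent ℝ (fun i : ↥s => (b i : EuclideanSpace ℝ (Fin m))) :=
    b.orthonormal.linearIndependent.comp _ Subtype.val_injective
  have hr : Set.range (fun i : ↥s => (b i : EuclideanSpace ℝ (Fin m))) = b '' ↑s := by
    rw [show (fun i : ↥s => (b i : EuclideanSpace ℝ (Fin m))) = ⇑b ∘ Subtype.val from rfl,
      Set.range_comp, Subtype.range_coe]
  rw [← hr, finrank_span_eq_card hli, Fintype.card_coe]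

open Finset in
lemma card_filter_count (f : Fin m → ℝ) (c : ℝ) :
    (univ.filter fun i => f i ≤ c).card = Multiset.countP (fun a => a ≤ c) (univ.val.map f) := by
  rw [Multiset.countP_map]
  rfl

open Finset in
lemma card_filter_count' (f : Fin m → ℝ) (c : ℝ) :
    (univ.filter fun i => c ≤ f i).card = Multiset.countP (fun a => c ≤ a) (univ.val.map f) := by
  rw [Multiset.countP_map]
  rfl

open Finset in
lemma weyl {S M : Matrix (Fin m) (Fin m) ℝ} (hS : S.IsHermitian) (hM : M.IsHermitian)
    (hpsd : (M - S).PosSemidef) {lam mu : Fin m → ℝ} (hlm : Monotone lam) (hmm : Monotone mu)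
    (hl : Finset.univ.val.map lam = Finset.univ.val.map hS.eigenvalues)
    (hm : Finset.univ.val.map mu = Finset.univ.val.map hM.eigenvalues) (j : Fin m) :
    lam j ≤ mu j := by
  classical
  set bM := hM.eigenvectorBasis with hbM
  set bS := hS.eigenvectorBasis with hbS
  set sU := univ.filter fun i => hM.eigenvalues i ≤ mu j with hsU
  set sV := univ.filter fun i => lam j ≤ hS.eigenvalues i with hsV
  have cardU : (j : ℕ) + 1 ≤ sU.card := by
    have h1 : sU.card = (univ.filter fun k => mu k ≤ mu j).card := by
      rw [hsU, card_filter_count, card_filter_count, hm]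
    rw [h1]
    calc (j : ℕ) + 1 = (Finset.Iic j).card := (Fin.card_Iic j).symm
      _ ≤ _ := Finset.card_le_card fun k hk => by
          simp only [Finset.mem_Iic] at hk
          simp [hmm hk]
  have cardV : m - (j : ℕ) ≤ sV.card := by
    have h1 : sV.card = (univ.filter fun k => lam j ≤ lam k).card := by
      rw [hsV, card_filter_count', card_filter_count', hl]
    rw [h1]
    calc m - (j : ℕ) = (Finset.Ici j).card := (Fin.card_Ici j).symm
      _ ≤ _ := Finset.card_le_card fun k hk => by
          simp only [Finset.mem_Ici] at hk
          simp [hlm hk]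
  set U := Submodule.span ℝ (bM '' ↑sU) with hU
  set V := Submodule.span ℝ (bS '' ↑sV) with hV
  have hrU : Module.finrank ℝ U = sU.card := finrank_span_orthonormal sU
  have hrV : Module.finrank ℝ V = sV.card := finrank_span_orthonormal sV
  have hsum := Submodule.finrank_sup_add_finrank_inf_eq U V
  have htop : Module.finrank ℝ ↥(U ⊔ V) ≤ m := by
    refine le_trans (Submodule.finrank_le _) ?_
    simp [finrank_euclideanSpace]
  have hpos : 0 < Module.finrank ℝ ↥(U ⊓ V) := by
    have hj := j.isLt
    omega
  obtain ⟨⟨x, hxUV⟩, hx0⟩ := Module.finrank_pos_iff_exists_ne_zero.mp hpos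
  have hx : x ≠ 0 := fun h => hx0 (Subtype.ext h)
  have hxU : x ∈ U := (Submodule.mem_inf.mp hxUV).1
  have hxV : x ∈ V := (Submodule.mem_inf.mp hxUV).2
  have hMx : ⟪x, (Matrix.toEuclideanLin M) x⟫_ℝ ≤ mu j * ⟪x, x⟫_ℝ := by
    rw [quad_eq hM, norm_sq_eq bM, Finset.mul_sum]
    refine Finset.sum_le_sum fun i _ => ?_
    by_cases hi : i ∈ sU
    · have : hM.eigenvalues i ≤ mu j := by
        rw [hsU] at hi; simpa using (Finset.mem_filter.mp hi).2
      exact mul_le_mul_of_nonneg_right this (sq_nonneg _)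
    · rw [repr_eq_zero_of_mem_span hxU hi]
      simp
  have hSx : lam j * ⟪x, x⟫_ℝ ≤ ⟪x, (Matrix.toEuclideanLin S) x⟫_ℝ := by
    rw [quad_eq hS, norm_sq_eq bS, Finset.mul_sum]
    refine Finset.sum_le_sum fun i _ => ?_
    by_cases hi : i ∈ sV
    · have : lam j ≤ hS.eigenvalues i := by
        rw [hsV] at hi; simpa using (Finset.mem_filter.mp hi).2
      exact mul_le_mul_of_nonneg_right this (sq_nonneg _)
    · rw [repr_eq_zero_of_mem_span hxV hi]
      simp
  have hMS : ⟪x, (Matrix.toEuclideanLin S) x⟫_ℝ ≤ ⟪x, (Matrix.toEuclideanLin M) x⟫_ℝ := by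
    have h0 := hpsd.dotProduct_mulVec_nonneg (WithLp.ofLp x)
    have hdot : (0:ℝ) ≤ ⟪x, (Matrix.toEuclideanLin (M - S)) x⟫_ℝ := by
      have heq : ⟪x, (Matrix.toEuclideanLin (M - S)) x⟫_ℝ
          = dotProduct (star x) ((M - S) *ᵥ x) := by
        simp [Matrix.toEuclideanLin, PiLp.inner_apply, RCLike.inner_apply, dotProduct,
          Matrix.sub_mulVec, WithLp.equiv, Equiv.refl_apply]
        exact Finset.sum_congr rfl fun i _ => mul_comm _ _
      rw [heq]; exact h0
    rw [map_sub] at hdot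
    have : (Matrix.toEuclideanLin M - Matrix.toEuclideanLin S) x
        = (Matrix.toEuclideanLin M) x - (Matrix.toEuclideanLin S) x := rfl
    rw [this, inner_sub_right] at hdot
    linarith
  have hxx : 0 < ⟪x, x⟫_ℝ := by
    rw [real_inner_self_eq_norm_sq]
    have : 0 < ‖x‖ := norm_pos_iff.mpr hx
    positivity
  have := le_trans hSx (le_trans hMS hMx)
  exact le_of_mul_le_mul_right (by linarith) hxx

end EigenAux

open EigenAux

/-- Let `A` be symmetric nonsingular indefinite and `T` SPD.  If
`μ₁ ≤ ⋯ ≤ μₙ` are the eigenvalues of `T|A|` and `λ₁ ≤ ⋯ ≤ λₙ` the (real)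
eigenvalues of `TA`, then `−μ_{n−j+1} ≤ λ_j ≤ μ_j` for all `j`.  Eigenvalues
are encoded through factorizations of the characteristic polynomials. -/
theorem eigenvalue_bounds_TA {n : ℕ}
    {A T : Matrix (Fin n) (Fin n) ℝ} (hA : A.IsHermitian) (hdet : IsUnit A.det)
    (hT : T.PosDef)
    (hindef : (∃ i, hA.eigenvalues i < 0) ∧ (∃ i, 0 < hA.eigenvalues i))
    (lam mu : Fin n → ℝ) (hlam_mono : Monotone lam) (hmu_mono : Monotone mu)
    (hlam : (T * A).charpoly = ∏ j, (X - C (lam j)))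
    (hmu : (T * matAbs hA).charpoly = ∏ j, (X - C (mu j))) :
    ∀ j : Fin n, -mu j.rev ≤ lam j ∧ lam j ≤ mu j := by
  classical
  -- the PSD square root of T
  set R := (by open scoped MatrixOrder in exact CFC.sqrt T : Matrix (Fin n) (Fin n) ℝ) with hRdef
  have hRpsd : R.PosSemidef := by open scoped MatrixOrder in exact (CFC.sqrt_nonneg T).posSemidef
  have hRH : R.IsHermitian := hRpsd.1
  have hRR : R * R = T := by
    open scoped MatrixOrder in exact CFC.sqrt_mul_sqrt_self T hT.posSemidef.nonneg
  have hdetR : IsUnit R.det := by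
    have h1 : R.det * R.det = T.det := by rw [← Matrix.det_mul, hRR]
    have h2 : T.det ≠ 0 := hT.det_pos.ne'
    rw [isUnit_iff_ne_zero]
    intro h; rw [h, mul_zero] at h1; exact h2 h1.symm
  have hRinv : R * R⁻¹ = 1 := Matrix.mul_nonsing_inv R hdetR
  -- spectral decomposition pieces for A
  set Uu : Matrix (Fin n) (Fin n) ℝ := (hA.eigenvectorUnitary : Matrix (Fin n) (Fin n) ℝ)
    with hUu
  have hUU : Uu * star Uu = 1 := Unitary.mul_star_self_of_mem hA.eigenvectorUnitary.2
  have hAbsH : (matAbs hA).IsHermitian := by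
    rw [matAbs, Matrix.star_eq_conjTranspose]
    exact Matrix.isHermitian_mul_mul_conjTranspose _ (Matrix.isHermitian_diagonal _)
  -- the symmetric congruent matrices
  set S := R * A * R with hSdef
  set M := R * matAbs hA * R with hMdef
  have hSH : S.IsHermitian := by
    have := Matrix.isHermitian_mul_mul_conjTranspose R (A := A) hA
    rwa [hRH.eq] at this
  have hMH : M.IsHermitian := by
    have := Matrix.isHermitian_mul_mul_conjTranspose R (A := matAbs hA) hAbsH
    rwa [hRH.eq] at this
  -- charpoly transfers
  have hTA : T * A = R * S * R⁻¹ := by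
    have h1 : R * S * R⁻¹ = (R * R) * A * (R * R⁻¹) := by
      rw [hSdef]; simp only [Matrix.mul_assoc]
    rw [h1, hRR, hRinv, Matrix.mul_one]
  have hTAbs : T * matAbs hA = R * M * R⁻¹ := by
    have h1 : R * M * R⁻¹ = (R * R) * matAbs hA * (R * R⁻¹) := by
      rw [hMdef]; simp only [Matrix.mul_assoc]
    rw [h1, hRR, hRinv, Matrix.mul_one]
  have hlamS : S.charpoly = ∏ j, (X - C (lam j)) := by
    rw [← hlam, hTA, charpoly_conj_aux _ _ _ hRinv]
  have hmuM : M.charpoly = ∏ j, (X - C (mu j)) := by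
    rw [← hmu, hTAbs, charpoly_conj_aux _ _ _ hRinv]
  have hml : Finset.univ.val.map lam = Finset.univ.val.map hSH.eigenvalues :=
    multiset_eig hSH hlamS
  have hmm : Finset.univ.val.map mu = Finset.univ.val.map hMH.eigenvalues :=
    multiset_eig hMH hmuM
  -- positive semidefiniteness of M - S and M + S
  have habs_sub : (matAbs hA - A).PosSemidef := by
    have h1 : matAbs hA - A = Uu * Matrix.diagonal
        (fun i => |hA.eigenvalues i| - hA.eigenvalues i) * star Uu := by
      have hsplit : Uu * Matrix.diagonal
          (fun i => |hA.eigenvalues i| - hA.eigenvalues i) * star Uu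
          = matAbs hA - Uu * Matrix.diagonal hA.eigenvalues * star Uu := by
        rw [matAbs, ← Matrix.diagonal_sub, Matrix.mul_sub, Matrix.sub_mul]
      rw [hsplit, ← hermitian_spectral hA]
    rw [h1, Matrix.star_eq_conjTranspose]
    refine Matrix.PosSemidef.mul_mul_conjTranspose_same (Matrix.PosSemidef.diagonal ?_) Uu
    intro i
    exact sub_nonneg.mpr (le_abs_self _)
  have habs_add : (matAbs hA + A).PosSemidef := by
    have h1 : matAbs hA + A = Uu * Matrix.diagonal
        (fun i => |hA.eigenvalues i| + hA.eigenvalues i) * star Uu := by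
      have hsplit : Uu * Matrix.diagonal
          (fun i => |hA.eigenvalues i| + hA.eigenvalues i) * star Uu
          = matAbs hA + Uu * Matrix.diagonal hA.eigenvalues * star Uu := by
        rw [matAbs, ← Matrix.diagonal_add, Matrix.mul_add, Matrix.add_mul]
      rw [hsplit, ← hermitian_spectral hA]
    rw [h1, Matrix.star_eq_conjTranspose]
    refine Matrix.PosSemidef.mul_mul_conjTranspose_same (Matrix.PosSemidef.diagonal ?_) Uu
    intro i
    exact (by linarith [neg_abs_le (hA.eigenvalues i)] :
      (0:ℝ) ≤ |hA.eigenvalues i| + hA.eigenvalues i)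
  have hMsubS : (M - S).PosSemidef := by
    have h1 : M - S = R * (matAbs hA - A) * Rᴴ := by
      rw [hRH.eq, hMdef, hSdef, Matrix.mul_sub, Matrix.sub_mul]
    rw [h1]
    exact habs_sub.mul_mul_conjTranspose_same R
  have hMaddS : (M - (-S)).PosSemidef := by
    have h1 : M - (-S) = R * (matAbs hA + A) * Rᴴ := by
      rw [hRH.eq, hMdef, hSdef, sub_neg_eq_add, Matrix.mul_add, Matrix.add_mul]
    rw [h1]
    exact habs_add.mul_mul_conjTranspose_same R
  -- upper bound via Weyl
  have hupper : ∀ j, lam j ≤ mu j := fun j =>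
    weyl hSH hMH hMsubS hlam_mono hmu_mono hml hmm j
  -- lower bound via Weyl applied to -S
  set lam' : Fin n → ℝ := fun k => -lam k.rev with hlam'
  have hlam'_mono : Monotone lam' := fun a b hab => by
    have : b.rev ≤ a.rev := Fin.rev_le_rev.mpr hab
    exact neg_le_neg (hlam_mono this)
  have hml' : Finset.univ.val.map lam' = Finset.univ.val.map hSH.neg.eigenvalues := by
    rw [multiset_eig_neg hSH, ← hml]
    have hrev : Finset.univ.val.map (Fin.rev : Fin n → Fin n) = Finset.univ.val := by
      have := Finset.map_univ_equiv (Fin.revPerm : Fin n ≃ Fin n)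
      calc Finset.univ.val.map (Fin.rev : Fin n → Fin n)
          = (Finset.univ.map (Fin.revPerm : Fin n ≃ Fin n).toEmbedding).val := rfl
        _ = Finset.univ.val := by rw [this]
    calc Finset.univ.val.map lam'
        = (Finset.univ.val.map (Fin.rev : Fin n → Fin n)).map (fun k => -lam k) := by
          rw [Multiset.map_map]; rfl
      _ = Finset.univ.val.map (fun k => -lam k) := by rw [hrev]
      _ = (Finset.univ.val.map lam).map (fun a => -a) := by rw [Multiset.map_map]; rfl
  have hlower : ∀ j, lam' j ≤ mu j := fun j =>
    weyl hSH.neg hMH hMaddS hlam'_mono hmu_mono hml' hmm j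
  intro j
  refine ⟨?_, hupper j⟩
  have := hlower j.rev
  rw [hlam'] at this
  simp only [Fin.rev_rev] at this
  linarith
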